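/- For an odd prime p and nonzero integer u, there exists ℓ ∈ Z_{(p)}^× with v_p(ℓ^u − 1) equal to: 0 if (p−1) does not divide u, and 1 + v_p(u) if (p−1) divides u. Consequently, the greatest common divisor over all ℓ ∈ Z coprime to p of ℓ^u − 1 has p-adic valuation 0 if (p−1) ∤ u and 1 + v_p(u) if (p−1) | u. -/

import Mathlib

private lemma emultInt_eq {p : ℕ} (hp : p.Prime) {z : ℤ} (hz : z ≠ 0) :
    emultiplicity (p : ℤ) z = (padicValInt p z : ℕ∞) := by
  have hf : FiniteMultiplicity (p : ℤ) z :=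
    Int.finiteMultiplicity_iff.2 ⟨by simpa using hp.ne_one, hz⟩
  rw [hf.emultiplicity_eq_multiplicity, padicValInt.of_ne_one_ne_zero hp.ne_one hz]

private lemma emultNat_eq {p : ℕ} (hp : p.Prime) {n : ℕ} (hn : n ≠ 0) :
    emultiplicity p n = (padicValNat p n : ℕ∞) := by
  have hf : FiniteMultiplicity p n :=
    Nat.finiteMultiplicity_iff.2 ⟨hp.ne_one, Nat.pos_of_ne_zero hn⟩
  rw [hf.emultiplicity_eq_multiplicity, padicValNat_def' hp.ne_one hn]

/-- Value of v_p((1+p)^n - 1). -/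
private lemma witness_val {p : ℕ} (hp : p.Prime) (hodd : Odd p) {n : ℕ} (hn : n ≠ 0) :
    padicValInt p ((1 + (p : ℤ)) ^ n - 1) = 1 + padicValNat p n := by
  have hx : ¬ (p : ℤ) ∣ (1 + (p : ℤ)) := by
    intro h
    have : (p : ℤ) ∣ 1 := (dvd_add_right (dvd_refl _)).mp (by rwa [add_comm] at h)
    exact hp.one_lt.ne' (by exact_mod_cast Int.eq_one_of_dvd_one (by positivity) this)
  have hxy : (p : ℤ) ∣ (1 + (p : ℤ)) - 1 := by ring_nf; simp
  have key := Int.emultiplicity_pow_sub_pow hp hodd hxy hx n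
  have h1 : (1 + (p : ℤ)) - 1 = (p : ℤ) := by ring
  have hlt : (1 : ℤ) < 1 + (p : ℤ) := by
    have := hp.pos; omega
  have hne : (1 + (p : ℤ)) ^ n - 1 ≠ 0 := by
    have := one_lt_pow₀ hlt hn
    omega
  rw [one_pow, h1, emultInt_eq hp hne, emultInt_eq hp (by exact_mod_cast hp.ne_zero),
    emultNat_eq hp hn, padicValInt.self hp.one_lt] at key
  exact_mod_cast key

/-- Lower bound when (p-1) ∣ n. -/
private lemma core_lb {p : ℕ} (hp : p.Prime) (hodd : Odd p) {ℓ : ℤ} (hl : ¬ (p : ℤ) ∣ ℓ)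
    {n : ℕ} (hn : n ≠ 0) (h1 : ℓ ^ n ≠ 1) (hdvd : (p - 1) ∣ n) :
    1 + padicValNat p n ≤ padicValInt p (ℓ ^ n - 1) := by
  haveI : Fact p.Prime := ⟨hp⟩
  obtain ⟨m, rfl⟩ := hdvd
  have hm : m ≠ 0 := by rintro rfl; simp at hn
  set a : ℤ := ℓ ^ (p - 1) with ha
  have hrw : ℓ ^ ((p - 1) * m) = a ^ m := by rw [ha, pow_mul]
  have hpa : ¬ (p : ℤ) ∣ a := fun h => hl ((Nat.prime_iff_prime_int.mp hp).dvd_of_dvd_pow h)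
  have hl0 : (ℓ : ZMod p) ≠ 0 := by
    rwa [Ne, ZMod.intCast_zmod_eq_zero_iff_dvd]
  have hpa1 : (p : ℤ) ∣ a - 1 := by
    rw [← ZMod.intCast_zmod_eq_zero_iff_dvd, ha]
    push_cast
    rw [sub_eq_zero]
    exact ZMod.pow_card_sub_one_eq_one hl0
  have hane : a ≠ 1 := by
    intro h
    apply h1
    rw [hrw, h, one_pow]
  have h1' : a ^ m ≠ 1 := by rwa [hrw] at h1
  have hne : a ^ m - 1 ≠ 0 := sub_ne_zero.2 h1'
  have hane' : a - 1 ≠ 0 := sub_ne_zero.2 hane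
  have key := Int.emultiplicity_pow_sub_pow hp hodd hpa1 hpa m
  rw [one_pow, emultInt_eq hp hne, emultInt_eq hp hane', emultNat_eq hp hm] at key
  have key' : padicValInt p (a ^ m - 1) = padicValInt p (a - 1) + padicValNat p m := by
    exact_mod_cast key
  have hdvdm : padicValNat p ((p - 1) * m) = padicValNat p m := by
    have h2 := hp.two_le
    rw [padicValNat.mul (by omega) hm, padicValNat.eq_zero_of_not_dvd
      (Nat.not_dvd_of_pos_of_lt (by omega) (by omega)), zero_add]
  have hone : 1 ≤ padicValInt p (a - 1) := by
    rw [padicValInt]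
    exact one_le_padicValNat_of_dvd (Int.natAbs_ne_zero.2 hane')
      (Int.ofNat_dvd_left.mp hpa1)
  rw [hrw, key', hdvdm]
  omega

/-- A primitive root: ℓ with p ∤ ℓ and p ∣ ℓ^n - 1 ↔ (p-1) ∣ n. -/
private lemma prim_root {p : ℕ} (hp : p.Prime) :
    ∃ ℓ : ℤ, ¬ (p : ℤ) ∣ ℓ ∧ ∀ n : ℕ, ((p : ℤ) ∣ ℓ ^ n - 1 ↔ (p - 1) ∣ n) := by
  haveI : Fact p.Prime := ⟨hp⟩
  obtain ⟨g, hg⟩ := IsCyclic.exists_generator (α := (ZMod p)ˣ)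
  have hord : orderOf g = p - 1 := by
    rw [orderOf_eq_card_of_forall_mem_zpowers hg, Nat.card_eq_fintype_card,
      ZMod.card_units_eq_totient, Nat.totient_prime hp]
  refine ⟨((g : ZMod p).val : ℤ), ?_, ?_⟩
  · rw [← ZMod.intCast_zmod_eq_zero_iff_dvd]
    push_cast
    rw [ZMod.natCast_val, ZMod.cast_id]
    exact g.ne_zero
  · intro n
    rw [← ZMod.intCast_zmod_eq_zero_iff_dvd]
    push_cast
    rw [ZMod.natCast_val, ZMod.cast_id, sub_eq_zero, ← Units.val_pow_eq_pow_val,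
      Units.val_eq_one, ← hord]
    exact orderOf_dvd_iff_pow_eq_one.symm
private lemma padicValInt_neg' (p : ℕ) (z : ℤ) : padicValInt p (-z) = padicValInt p z := by
  simp [padicValInt]

private lemma zpow_eq_one_iff' {ℓ : ℤ} (u : ℤ) :
    (ℓ : ℚ) ^ u = 1 ↔ ℓ ^ u.natAbs = 1 := by
  have base : ((ℓ : ℚ)) ^ u.natAbs = 1 ↔ ℓ ^ u.natAbs = 1 := by
    rw [show ((ℓ : ℚ)) ^ u.natAbs = ((ℓ ^ u.natAbs : ℤ) : ℚ) by push_cast; ring]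
    exact_mod_cast Iff.rfl
  rcases Int.natAbs_eq u with h | h
  · have hzp : (ℓ : ℚ) ^ u = (ℓ : ℚ) ^ u.natAbs := by rw [← zpow_natCast, ← h]
    rw [hzp, base]
  · have hzp : (ℓ : ℚ) ^ u = ((ℓ : ℚ) ^ u.natAbs)⁻¹ := by
      rw [← zpow_natCast, ← zpow_neg, ← h]
    rw [hzp, inv_eq_one, base]

private lemma val_red {p : ℕ} (hp : p.Prime) {ℓ : ℤ} (hl : ¬ (p : ℤ) ∣ ℓ) {u : ℤ}
    (h1 : ℓ ^ u.natAbs ≠ 1) :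
    padicValRat p ((ℓ : ℚ) ^ u - 1) = (padicValInt p (ℓ ^ u.natAbs - 1) : ℤ) := by
  haveI : Fact p.Prime := ⟨hp⟩
  have hl0 : ℓ ≠ 0 := by rintro rfl; exact hl (dvd_zero _)
  rcases Int.natAbs_eq u with h | h
  · have hzp : (ℓ : ℚ) ^ u = (ℓ : ℚ) ^ u.natAbs := by rw [← zpow_natCast, ← h]
    rw [hzp,
      show ((ℓ : ℚ)) ^ u.natAbs - 1 = ((ℓ ^ u.natAbs - 1 : ℤ) : ℚ) by push_cast; ring]
    exact padicValRat.of_int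
  · have hzp : (ℓ : ℚ) ^ u = ((ℓ : ℚ) ^ u.natAbs)⁻¹ := by
      rw [← zpow_natCast, ← zpow_neg, ← h]
    have hd : ((ℓ ^ u.natAbs : ℤ) : ℚ) ≠ 0 := by exact_mod_cast pow_ne_zero _ hl0
    have hnum : ((1 - ℓ ^ u.natAbs : ℤ) : ℚ) ≠ 0 := by
      have : (1 - ℓ ^ u.natAbs : ℤ) ≠ 0 := fun hz => h1 (by omega)
      exact_mod_cast this
    have hrw : (ℓ : ℚ) ^ u - 1 =
        ((1 - ℓ ^ u.natAbs : ℤ) : ℚ) / ((ℓ ^ u.natAbs : ℤ) : ℚ) := by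
      rw [hzp]
      field_simp
      try push_cast
      try ring
    rw [hrw, padicValRat.div hnum hd, padicValRat.of_int, padicValRat.of_int,
      padicValInt.eq_zero_of_not_dvd
        (fun hdd => hl ((Nat.prime_iff_prime_int.mp hp).dvd_of_dvd_pow hdd)),
      show (1 - ℓ ^ u.natAbs : ℤ) = -(ℓ ^ u.natAbs - 1) by ring, padicValInt_neg']
    simp

/-- For an odd prime `p` and nonzero integer `u`, the minimum over integers `ℓ` coprime
to `p` (with `ℓ^u ≠ 1`) of `v_p(ℓ^u - 1)` is `0` if `(p-1) ∤ u` and `1 + v_p(u)` if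
`(p-1) ∣ u`; equivalently the `p`-adic valuation of `gcd_ℓ (ℓ^u - 1)` is this value. -/
theorem stmt15 (p : ℕ) (hp : p.Prime) (hodd : Odd p) (u : ℤ) (hu : u ≠ 0) :
    (∃ ℓ : ℤ, ¬ (p : ℤ) ∣ ℓ ∧ (ℓ : ℚ) ^ u ≠ 1 ∧
      padicValRat p ((ℓ : ℚ) ^ u - 1) =
        (if ((p : ℤ) - 1) ∣ u then 1 + (padicValInt p u : ℤ) else 0)) ∧
    (∀ ℓ : ℤ, ¬ (p : ℤ) ∣ ℓ → (ℓ : ℚ) ^ u ≠ 1 →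
      (if ((p : ℤ) - 1) ∣ u then 1 + (padicValInt p u : ℤ) else 0) ≤
        padicValRat p ((ℓ : ℚ) ^ u - 1)) := by
  haveI : Fact p.Prime := ⟨hp⟩
  set n := u.natAbs with hn
  have hn0 : n ≠ 0 := Int.natAbs_ne_zero.2 hu
  have hcast : ((p : ℤ) - 1) = ((p - 1 : ℕ) : ℤ) := by
    have := hp.one_lt; omega
  have hdvd_iff : ((p : ℤ) - 1) ∣ u ↔ (p - 1) ∣ n := by
    rw [hcast, Int.natCast_dvd]
  have hval : padicValInt p u = padicValNat p n := rfl
  by_cases hD : ((p : ℤ) - 1) ∣ u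
  · have hDn : (p - 1) ∣ n := hdvd_iff.mp hD
    constructor
    · have hx : ¬ (p : ℤ) ∣ (1 + (p : ℤ)) := by
        intro hdd
        have h1d : (p : ℤ) ∣ 1 := (dvd_add_right dvd_rfl).mp (by rwa [add_comm] at hdd)
        have := Int.le_of_dvd one_pos h1d
        have := hp.two_le
        omega
      have hlt : (1 : ℤ) < 1 + (p : ℤ) := by have := hp.pos; omega
      have h1int : (1 + (p : ℤ)) ^ n ≠ 1 := by
        have := one_lt_pow₀ hlt hn0
        omega
      refine ⟨1 + (p : ℤ), hx, fun hq => h1int ((zpow_eq_one_iff' u).mp hq), ?_⟩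
      rw [val_red hp hx h1int, witness_val hp hodd hn0, if_pos hD, hval]
      push_cast
      ring
    · intro ℓ hl h1
      have h1int : ℓ ^ n ≠ 1 := fun hq => h1 ((zpow_eq_one_iff' u).mpr hq)
      rw [val_red hp hl h1int, if_pos hD, hval]
      have := core_lb hp hodd hl hn0 h1int hDn
      exact_mod_cast this
  · obtain ⟨ℓ, hl, hiff⟩ := prim_root hp
    constructor
    · have hnd : ¬ (p : ℤ) ∣ ℓ ^ n - 1 := fun hdd => hD (hdvd_iff.mpr ((hiff n).mp hdd))
      have h1int : ℓ ^ n ≠ 1 := fun hq => hnd (by rw [hq]; simp)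
      refine ⟨ℓ, hl, fun hq => h1int ((zpow_eq_one_iff' u).mp hq), ?_⟩
      rw [val_red hp hl h1int, if_neg hD, padicValInt.eq_zero_of_not_dvd hnd]
      simp
    · intro ℓ' hl' h1
      have h1int : ℓ' ^ n ≠ 1 := fun hq => h1 ((zpow_eq_one_iff' u).mpr hq)
      rw [val_red hp hl' h1int, if_neg hD]
      exact_mod_cast Nat.zero_le _
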